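/- The triangle graph T(G) of a graph G contains a triangle (an induced C_3) if and only if G contains a subgraph isomorphic to K_4 or to K_5 minus the edges of a triangle. Equivalently, T(G) is triangle-free iff G has no subgraph isomorphic to K_4 or K_5 - K_3. -/

import Mathlib

open SimpleGraph

/-- A triangle in a graph: a 3-element vertex set, pairwise adjacent. -/
def IsTriangle {V : Type*} (G : SimpleGraph V) (t : Finset V) : Prop :=
  t.card = 3 ∧ ∀ u ∈ t, ∀ v ∈ t, u ≠ v → G.Adj u v

/-- The triangle graph: vertices are the triangles of `G`, two triangles are
adjacent iff they share an edge (equivalently, share exactly two vertices). -/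
def triangleGraph {V : Type*} [DecidableEq V] (G : SimpleGraph V) :
    SimpleGraph {t : Finset V // IsTriangle G t} where
  Adj s t := s ≠ t ∧ ((s : Finset V) ∩ (t : Finset V)).card = 2
  symm := by
    constructor
    intro s t h
    exact ⟨h.1.symm, by rw [Finset.inter_comm]; exact h.2⟩
  loopless := ⟨fun s h => h.1 rfl⟩

/-- `K₅` minus the edges of a triangle (on vertices 0,1,2). -/
def K5mK3 : SimpleGraph (Fin 5) where
  Adj u v := u ≠ v ∧ ¬(u.val < 3 ∧ v.val < 3)
  symm := by
    constructor
    intro u v h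
    exact ⟨h.1.symm, fun hc => h.2 ⟨hc.2, hc.1⟩⟩
  loopless := ⟨fun u h => h.1 rfl⟩

/-- The wheel `Wₙ = K₁ ∨ Cₙ`; the hub is `none`. -/
def wheel (n : ℕ) : SimpleGraph (Option (Fin n)) :=
  SimpleGraph.fromRel (fun u v =>
    u = none ∨ ∃ a b, u = some a ∧ v = some b ∧ (cycleGraph n).Adj a b)

/-- The square of a graph: join vertices at distance at most 2. -/
def squareGraph {V : Type*} (G : SimpleGraph V) : SimpleGraph V where
  Adj u v := u ≠ v ∧ (G.Adj u v ∨ ∃ w, G.Adj u w ∧ G.Adj w v)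
  symm := by
    constructor
    intro u v h
    refine ⟨h.1.symm, ?_⟩
    rcases h.2 with h' | ⟨w, h1, h2⟩
    · exact Or.inl h'.symm
    · exact Or.inr ⟨w, h2.symm, h1.symm⟩
  loopless := ⟨fun u h => h.1 rfl⟩

/-- The number of triangles of `G` containing both `u` and `v`. -/
noncomputable def triCount {V : Type*} (G : SimpleGraph V) (u v : V) : ℕ :=
  {t : Finset V | IsTriangle G t ∧ u ∈ t ∧ v ∈ t}.ncard

/-- `G` contains a (not necessarily induced) subgraph isomorphic to `H`. -/
def HasSubgraphIso {α V : Type*} (H : SimpleGraph α) (G : SimpleGraph V) : Prop :=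
  ∃ f : H →g G, Function.Injective f

section Helpers
variable {V : Type*} [DecidableEq V] {G : SimpleGraph V}

lemma triangleGraph_adj {s t : {t : Finset V // IsTriangle G t}} :
    (triangleGraph G).Adj s t ↔ s ≠ t ∧ ((s : Finset V) ∩ (t : Finset V)).card = 2 := Iff.rfl

lemma K5mK3_adj {u v : Fin 5} : K5mK3.Adj u v ↔ u ≠ v ∧ ¬(u.val < 3 ∧ v.val < 3) := Iff.rfl

lemma isTriangle_mk {x y z : V} (hxy : G.Adj x y) (hxz : G.Adj x z) (hyz : G.Adj y z) :
    IsTriangle G {x, y, z} := by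
  constructor
  · rw [Finset.card_insert_of_notMem (by simp [hxy.ne, hxz.ne]),
      Finset.card_insert_of_notMem (by simp [hyz.ne])]
    rfl
  · intro u hu v hv huv
    simp only [Finset.mem_insert, Finset.mem_singleton] at hu hv
    rcases hu with rfl | rfl | rfl <;> rcases hv with rfl | rfl | rfl <;>
      first
        | exact absurd rfl huv
        | exact hxy | exact hxy.symm | exact hxz | exact hxz.symm
        | exact hyz | exact hyz.symm

lemma pair_inter_card {x y p q : V} (hpq : p ≠ q) (hpx : p ≠ x) (hpy : p ≠ y)
    (hqx : q ≠ x) (hqy : q ≠ y) (hxy : x ≠ y) :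
    (({p, x, y} : Finset V) ∩ {q, x, y}).card = 2 := by
  have h : (({p, x, y} : Finset V) ∩ {q, x, y}) = {x, y} := by
    ext z
    simp only [Finset.mem_inter, Finset.mem_insert, Finset.mem_singleton]
    constructor
    · rintro ⟨rfl | rfl | rfl, h2⟩
      · rcases h2 with rfl | h2 | h2
        · exact absurd rfl hpq
        · exact Or.inl h2
        · exact Or.inr h2
      · exact Or.inl rfl
      · exact Or.inr rfl
    · rintro (rfl | rfl) <;> simp
  rw [h, Finset.card_insert_of_notMem (by simp [hxy]), Finset.card_singleton]

lemma pair_ne {x y p q : V} (hpq : p ≠ q) (hqx : q ≠ x) (hqy : q ≠ y) :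
    ({q, x, y} : Finset V) ≠ {p, x, y} := by
  intro h
  have : q ∈ ({p, x, y} : Finset V) := h ▸ (by simp)
  simp only [Finset.mem_insert, Finset.mem_singleton] at this
  rcases this with rfl | rfl | rfl
  · exact hpq.symm rfl
  · exact hqx rfl
  · exact hqy rfl

end Helpers

section Helpers2
variable {V : Type*} [DecidableEq V] {G : SimpleGraph V}

lemma triAdj_mk {x y p q : V} (hpq : p ≠ q) (hpx : p ≠ x) (hpy : p ≠ y)
    (hqx : q ≠ x) (hqy : q ≠ y) (hxy : x ≠ y)
    (S T : {t : Finset V // IsTriangle G t})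
    (hS : S.1 = {p, x, y}) (hT : T.1 = {q, x, y}) : (triangleGraph G).Adj S T := by
  refine triangleGraph_adj.mpr ⟨?_, ?_⟩
  · intro h
    rw [h, hT] at hS
    exact pair_ne hpq hqx hqy hS
  · rw [hS, hT]
    exact pair_inter_card hpq hpx hpy hqx hqy hxy

lemma hasK4 {a b c d : V} (hab : G.Adj a b) (hac : G.Adj a c) (had : G.Adj a d)
    (hbc : G.Adj b c) (hbd : G.Adj b d) (hcd : G.Adj c d) :
    HasSubgraphIso (completeGraph (Fin 4)) G := by
  have nab := hab.ne; have nac := hac.ne; have nad := had.ne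
  have nbc := hbc.ne; have nbd := hbd.ne; have ncd := hcd.ne
  have hinj : Function.Injective ![a, b, c, d] := by
    intro u v h
    fin_cases u <;> fin_cases v <;> simp_all
  refine ⟨⟨![a, b, c, d], fun {u v} h => ?_⟩, hinj⟩
  have huv : u ≠ v := h
  fin_cases u <;> fin_cases v <;>
    simp only [Matrix.cons_val_zero, Matrix.cons_val_one, Matrix.head_cons,
      Matrix.cons_val_two, Matrix.tail_cons, Matrix.cons_val_three, Matrix.head_fin_const,
      Matrix.cons_val_fin_one] <;>
    first
      | exact absurd rfl huv
      | exact hab | exact hab.symm | exact hac | exact hac.symm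
      | exact had | exact had.symm | exact hbc | exact hbc.symm
      | exact hbd | exact hbd.symm | exact hcd | exact hcd.symm

lemma hasK5mK3 {c d e a b : V} (hcd : c ≠ d) (hce : c ≠ e) (hde : d ≠ e)
    (hca : G.Adj c a) (hcb : G.Adj c b) (hda : G.Adj d a) (hdb : G.Adj d b)
    (hea : G.Adj e a) (heb : G.Adj e b) (hab : G.Adj a b) :
    HasSubgraphIso K5mK3 G := by
  have nca := hca.ne; have ncb := hcb.ne; have nda := hda.ne; have ndb := hdb.ne
  have nea := hea.ne; have neb := heb.ne; have nab := hab.ne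
  have hinj : Function.Injective ![c, d, e, a, b] := by
    intro u v h
    fin_cases u <;> fin_cases v <;> simp_all
  refine ⟨⟨![c, d, e, a, b], fun {u v} h => ?_⟩, hinj⟩
  fin_cases u <;> fin_cases v <;>
    first
      | exact absurd rfl (K5mK3_adj.mp h).1
      | exact absurd ⟨by decide, by decide⟩ (K5mK3_adj.mp h).2
      | (simp only [Matrix.cons_val_zero, Matrix.cons_val_one, Matrix.head_cons,
          Matrix.cons_val_two, Matrix.tail_cons, Matrix.cons_val_three,
          Matrix.cons_val_four, Matrix.head_fin_const, Matrix.cons_val_fin_one]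
         first
          | exact hca | exact hca.symm | exact hcb | exact hcb.symm
          | exact hda | exact hda.symm | exact hdb | exact hdb.symm
          | exact hea | exact hea.symm | exact heb | exact heb.symm
          | exact hab | exact hab.symm)

lemma embed_of_three (T0 T1 T2 : {t : Finset V // IsTriangle G t})
    (h01 : (triangleGraph G).Adj T0 T1) (h02 : (triangleGraph G).Adj T0 T2)
    (h12 : (triangleGraph G).Adj T1 T2) :
    Nonempty (cycleGraph 3 ↪g triangleGraph G) := by
  rw [cycleGraph_three_eq_top]
  have hinj : Function.Injective ![T0, T1, T2] := by
    have n01 := (triangleGraph_adj.mp h01).1; have n02 := (triangleGraph_adj.mp h02).1; have n12 := (triangleGraph_adj.mp h12).1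
    intro u v h
    fin_cases u <;> fin_cases v <;> simp_all
  refine ⟨⟨⟨![T0, T1, T2], hinj⟩, fun {u v} => ?_⟩⟩
  fin_cases u <;> fin_cases v <;> simp <;>
    first
      | exact h01 | exact h01.symm | exact h02 | exact h02.symm
      | exact h12 | exact h12.symm

end Helpers2

/-- `T(G)` contains a triangle iff `G` contains a subgraph isomorphic to `K₄`
or to `K₅` minus the edges of a triangle. -/
theorem triangleGraph_C3_iff {V : Type*} [Fintype V] [DecidableEq V]
    (G : SimpleGraph V) :
    Nonempty (cycleGraph 3 ↪g triangleGraph G) ↔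
      HasSubgraphIso (completeGraph (Fin 4)) G ∨ HasSubgraphIso K5mK3 G := by
  constructor
  · rintro ⟨emb⟩
    set t0 := emb 0 with ht0def
    set t1 := emb 1 with ht1def
    set t2 := emb 2 with ht2def
    have a01 : (triangleGraph G).Adj t0 t1 := emb.map_rel_iff.mpr (by decide)
    have a02 : (triangleGraph G).Adj t0 t2 := emb.map_rel_iff.mpr (by decide)
    have a12 : (triangleGraph G).Adj t1 t2 := emb.map_rel_iff.mpr (by decide)
    obtain ⟨a, b, hab, hs⟩ := Finset.card_eq_two.mp (triangleGraph_adj.mp a01).2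
    have hain : a ∈ t0.1 ∩ t1.1 := by rw [hs]; simp
    have hbin : b ∈ t0.1 ∩ t1.1 := by rw [hs]; simp
    have ha0 : a ∈ t0.1 := (Finset.mem_inter.mp hain).1
    have hb0 : b ∈ t0.1 := (Finset.mem_inter.mp hbin).1
    have ha1 : a ∈ t1.1 := (Finset.mem_inter.mp hain).2
    have hb1 : b ∈ t1.1 := (Finset.mem_inter.mp hbin).2
    -- third vertex of a triangle containing a,b
    have third : ∀ t : {t : Finset V // IsTriangle G t}, a ∈ t.1 → b ∈ t.1 →
        ∃ c, c ∈ t.1 ∧ c ≠ a ∧ c ≠ b ∧ t.1 = {c, a, b} := by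
      intro t hat hbt
      have hex : ∃ c ∈ t.1, c ∉ ({a, b} : Finset V) := by
        by_contra hcon
        push_neg at hcon
        have hsub : t.1 ⊆ {a, b} := fun x hx => hcon x hx
        have hle := Finset.card_le_card hsub
        rw [t.2.1, Finset.card_pair hab] at hle
        omega
      obtain ⟨c, hct, hcs⟩ := hex
      simp only [Finset.mem_insert, Finset.mem_singleton, not_or] at hcs
      refine ⟨c, hct, hcs.1, hcs.2, ?_⟩
      have hsub : ({c, a, b} : Finset V) ⊆ t.1 := by
        intro x hx
        simp only [Finset.mem_insert, Finset.mem_singleton] at hx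
        rcases hx with rfl | rfl | rfl <;> assumption
      refine (Finset.eq_of_subset_of_card_le hsub ?_).symm
      rw [t.2.1, Finset.card_insert_of_notMem (by simp [hcs.1, hcs.2]),
        Finset.card_pair hab]
    obtain ⟨c, hc0, hca, hcb, ht0⟩ := third t0 ha0 hb0
    obtain ⟨d, hd1, hda, hdb, ht1⟩ := third t1 ha1 hb1
    have hc1 : c ∉ t1.1 := fun h => by
      have : c ∈ ({a, b} : Finset V) := hs ▸ Finset.mem_inter.mpr ⟨hc0, h⟩
      simp only [Finset.mem_insert, Finset.mem_singleton] at this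
      rcases this with rfl | rfl
      · exact hca rfl
      · exact hcb rfl
    have hd0 : d ∉ t0.1 := fun h => by
      have : d ∈ ({a, b} : Finset V) := hs ▸ Finset.mem_inter.mpr ⟨h, hd1⟩
      simp only [Finset.mem_insert, Finset.mem_singleton] at this
      rcases this with rfl | rfl
      · exact hda rfl
      · exact hdb rfl
    have hcd : c ≠ d := fun h => hc1 (h ▸ hd1)
    -- adjacencies from t0, t1
    have hab' : G.Adj a b := t0.2.2 a ha0 b hb0 hab
    have hac' : G.Adj a c := t0.2.2 a ha0 c hc0 (Ne.symm hca)
    have hbc' : G.Adj b c := t0.2.2 b hb0 c hc0 (Ne.symm hcb)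
    have had' : G.Adj a d := t1.2.2 a ha1 d hd1 (Ne.symm hda)
    have hbd' : G.Adj b d := t1.2.2 b hb1 d hd1 (Ne.symm hdb)
    by_cases hmem : a ∈ t2.1 ∧ b ∈ t2.1
    · -- K₅ - K₃ case
      obtain ⟨e, he2, hea, heb, ht2⟩ := third t2 hmem.1 hmem.2
      have hec : e ≠ c := by
        rintro rfl
        exact (triangleGraph_adj.mp a02).1 (Subtype.ext (by rw [ht0, ht2]))
      have hed : e ≠ d := by
        rintro rfl
        exact (triangleGraph_adj.mp a12).1 (Subtype.ext (by rw [ht1, ht2]))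
      have hea' : G.Adj e a := t2.2.2 e he2 a hmem.1 hea
      have heb' : G.Adj e b := t2.2.2 e he2 b hmem.2 heb
      exact Or.inr (hasK5mK3 hcd (Ne.symm hec) (Ne.symm hed)
        hac'.symm hbc'.symm had'.symm hbd'.symm hea' heb' hab')
    · -- K₄ case
      have key : ∀ (t : {t : Finset V // IsTriangle G t}) (x : V), x ∉ ({a, b} : Finset V) →
          t.1 = {x, a, b} → (t.1 ∩ t2.1).card = 2 → x ∈ t2.1 := by
        intro t x hxs htx hcard
        by_contra hx2
        simp only [Finset.mem_insert, Finset.mem_singleton, not_or] at hxs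
        have hsub : t.1 ∩ t2.1 ⊆ {a, b} := by
          intro y hy
          obtain ⟨hy1, hy2⟩ := Finset.mem_inter.mp hy
          rw [htx] at hy1
          simp only [Finset.mem_insert, Finset.mem_singleton] at hy1 ⊢
          rcases hy1 with rfl | rfl | rfl
          · exact absurd hy2 hx2
          · exact Or.inl rfl
          · exact Or.inr rfl
        have heq := Finset.eq_of_subset_of_card_le hsub
          (by rw [hcard, Finset.card_pair hab])
        have ha2 : a ∈ t.1 ∩ t2.1 := by rw [heq]; simp
        have hb2 : b ∈ t.1 ∩ t2.1 := by rw [heq]; simp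
        exact hmem ⟨(Finset.mem_inter.mp ha2).2, (Finset.mem_inter.mp hb2).2⟩
      have hc2 : c ∈ t2.1 := key t0 c (by simp [hca, hcb]) ht0 (triangleGraph_adj.mp a02).2
      have hd2 : d ∈ t2.1 := key t1 d (by simp [hda, hdb]) ht1 (triangleGraph_adj.mp a12).2
      have hcd' : G.Adj c d := t2.2.2 c hc2 d hd2 hcd
      exact Or.inl (hasK4 hab' hac' had' hbc' hbd' hcd')
  · rintro (⟨f, hf⟩ | ⟨f, hf⟩)
    · -- from K₄
      have hadj : ∀ i j : Fin 4, i ≠ j → G.Adj (f i) (f j) := fun i j h => f.map_rel h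
      have hne : ∀ i j : Fin 4, i ≠ j → f i ≠ f j := fun i j h hh => h (hf hh)
      refine embed_of_three
        ⟨{f 1, f 2, f 3}, isTriangle_mk (hadj 1 2 (by decide)) (hadj 1 3 (by decide))
          (hadj 2 3 (by decide))⟩
        ⟨{f 0, f 2, f 3}, isTriangle_mk (hadj 0 2 (by decide)) (hadj 0 3 (by decide))
          (hadj 2 3 (by decide))⟩
        ⟨{f 0, f 1, f 3}, isTriangle_mk (hadj 0 1 (by decide)) (hadj 0 3 (by decide))
          (hadj 1 3 (by decide))⟩
        ?_ ?_ ?_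
      · exact triAdj_mk (hne 1 0 (by decide)) (hne 1 2 (by decide)) (hne 1 3 (by decide))
          (hne 0 2 (by decide)) (hne 0 3 (by decide)) (hne 2 3 (by decide)) _ _ rfl rfl
      · refine triAdj_mk (hne 2 0 (by decide)) (hne 2 1 (by decide)) (hne 2 3 (by decide))
          (hne 0 1 (by decide)) (hne 0 3 (by decide)) (hne 1 3 (by decide)) _ _ ?_ rfl
        show ({f 1, f 2, f 3} : Finset V) = {f 2, f 1, f 3}
        rw [Finset.insert_comm]
      · refine triAdj_mk (hne 2 1 (by decide)) (hne 2 0 (by decide)) (hne 2 3 (by decide))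
          (hne 1 0 (by decide)) (hne 1 3 (by decide)) (hne 0 3 (by decide)) _ _ ?_ ?_
        · show ({f 0, f 2, f 3} : Finset V) = {f 2, f 0, f 3}
          rw [Finset.insert_comm]
        · show ({f 0, f 1, f 3} : Finset V) = {f 1, f 0, f 3}
          rw [Finset.insert_comm]
    · -- from K₅ - K₃
      have hadj : ∀ i j : Fin 5, i ≠ j → ¬(i.val < 3 ∧ j.val < 3) → G.Adj (f i) (f j) :=
        fun i j h1 h2 => f.map_rel (K5mK3_adj.mpr ⟨h1, h2⟩)
      have hne : ∀ i j : Fin 5, i ≠ j → f i ≠ f j := fun i j h hh => h (hf hh)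
      have h34 : G.Adj (f 3) (f 4) := hadj 3 4 (by decide) (by decide)
      have h03 : G.Adj (f 0) (f 3) := hadj 0 3 (by decide) (by decide)
      have h04 : G.Adj (f 0) (f 4) := hadj 0 4 (by decide) (by decide)
      have h13 : G.Adj (f 1) (f 3) := hadj 1 3 (by decide) (by decide)
      have h14 : G.Adj (f 1) (f 4) := hadj 1 4 (by decide) (by decide)
      have h23 : G.Adj (f 2) (f 3) := hadj 2 3 (by decide) (by decide)
      have h24 : G.Adj (f 2) (f 4) := hadj 2 4 (by decide) (by decide)
      refine embed_of_three
        ⟨{f 0, f 3, f 4}, isTriangle_mk h03 h04 h34⟩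
        ⟨{f 1, f 3, f 4}, isTriangle_mk h13 h14 h34⟩
        ⟨{f 2, f 3, f 4}, isTriangle_mk h23 h24 h34⟩
        ?_ ?_ ?_
      · exact triAdj_mk (hne 0 1 (by decide)) (hne 0 3 (by decide)) (hne 0 4 (by decide))
          (hne 1 3 (by decide)) (hne 1 4 (by decide)) (hne 3 4 (by decide)) _ _ rfl rfl
      · exact triAdj_mk (hne 0 2 (by decide)) (hne 0 3 (by decide)) (hne 0 4 (by decide))
          (hne 2 3 (by decide)) (hne 2 4 (by decide)) (hne 3 4 (by decide)) _ _ rfl rfl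
      · exact triAdj_mk (hne 1 2 (by decide)) (hne 1 3 (by decide)) (hne 1 4 (by decide))
          (hne 2 3 (by decide)) (hne 2 4 (by decide)) (hne 3 4 (by decide)) _ _ rfl rfl
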